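/- Let F be the free group on two generators. Define a sequence of subgroups of F by G_0 = F (the whole group, as a subgroup) and G_{n+1} = the subgroup of F generated by {g² : g ∈ G_n}. Then for every n, G_n is a normal subgroup of F of finite index. -/

import Mathlib

private lemma finite_of_sq {Q : Type*} [Group Q] [Group.FG Q] (h : ∀ q : Q, q ^ 2 = 1) :
    Finite Q := by
  have hcomm : ∀ a b : Q, a * b = b * a := by
    have hinv : ∀ q : Q, q⁻¹ = q := by
      intro q
      have := h q
      rw [pow_two] at this
      exact inv_eq_of_mul_eq_one_right this
    intro a b
    calc a * b = (a * b)⁻¹ := (hinv _).symm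
    _ = b⁻¹ * a⁻¹ := mul_inv_rev a b
    _ = b * a := by rw [hinv, hinv]
  letI : CommGroup Q := { (inferInstance : Group Q) with mul_comm := hcomm }
  exact CommGroup.finite_of_fg_torsion Q fun q =>
    isOfFinOrder_iff_pow_eq_one.mpr ⟨2, two_pos, h q⟩

private lemma step {F : Type*} [Group F] [Group.FG F] (H : Subgroup F)
    (hN : H.Normal) (hF : H.FiniteIndex) :
    (Subgroup.closure {x : F | ∃ g ∈ H, x = g ^ 2}).Normal ∧
    (Subgroup.closure {x : F | ∃ g ∈ H, x = g ^ 2}).FiniteIndex := by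
  set S : Set F := {x : F | ∃ g ∈ H, x = g ^ 2} with hS
  set K : Subgroup F := Subgroup.closure S with hK
  have hKH : K ≤ H := by
    rw [hK, Subgroup.closure_le]
    rintro x ⟨g, hg, rfl⟩
    exact pow_mem hg 2
  have hnorm : K.Normal := by
    constructor
    intro n hn f
    have hmap : K.map (MulAut.conj f).toMonoidHom ≤ K := by
      rw [hK, MonoidHom.map_closure, Subgroup.closure_le]
      rintro y ⟨x, ⟨g, hg, rfl⟩, rfl⟩
      apply Subgroup.subset_closure
      exact ⟨f * g * f⁻¹, hN.conj_mem g hg f, by simp [MulAut.conj, mul_pow]⟩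
    exact hmap ⟨n, hn, rfl⟩
  refine ⟨hnorm, ?_⟩
  -- finite index
  haveI := hF
  haveI : Group.FG H := Subgroup.fg_of_index_ne_zero H
  have hsq : ∀ q : H ⧸ K.subgroupOf H, q ^ 2 = 1 := by
    intro q
    induction q using QuotientGroup.induction_on with
    | H h =>
      rw [← QuotientGroup.mk_pow, QuotientGroup.eq_one_iff]
      show ((h ^ 2 : H) : F) ∈ K
      push_cast
      exact Subgroup.subset_closure ⟨(h : F), h.2, rfl⟩
  haveI : Group.FG (H ⧸ K.subgroupOf H) :=
    Group.fg_of_surjective (QuotientGroup.mk'_surjective _)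
  have hfin : Finite (H ⧸ K.subgroupOf H) := finite_of_sq hsq
  haveI : (K.subgroupOf H).FiniteIndex := Subgroup.finiteIndex_of_finite_quotient
  constructor
  rw [← Subgroup.relIndex_mul_index hKH]
  exact Nat.mul_ne_zero (Subgroup.FiniteIndex.index_ne_zero) hF.index_ne_zero

theorem stmt_15 (G : ℕ → Subgroup (FreeGroup (Fin 2))) (hG0 : G 0 = ⊤)
    (hGs : ∀ n, G (n + 1) = Subgroup.closure {x : FreeGroup (Fin 2) | ∃ g ∈ G n, x = g ^ 2}) :
    ∀ n, (G n).Normal ∧ (G n).FiniteIndex := by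
  haveI : Group.FG (FreeGroup (Fin 2)) := by
    rw [Group.fg_iff]
    exact ⟨Set.range FreeGroup.of, FreeGroup.closure_range_of _, Set.finite_range _⟩
  intro n
  induction n with
  | zero =>
    rw [hG0]
    exact ⟨inferInstance, inferInstance⟩
  | succ n ih =>
    rw [hGs n]
    exact step (G n) ih.1 ih.2
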